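/- For 0 < ζ < 1 and any ξ ∈ ℝ, the quadratic form of the Robin harmonic oscillator decomposes as q_{ζ,ξ}(u) = (1 − ζ²)·[∫_0^∞ |u'|² dτ − |u(0)|²] + ζ²·[∫_0^∞ (|u'|² + (τ − ζ^{-1}ξ)²|u|²) dτ − |u(0)|²] for every admissible u; consequently, if μ(A) denotes the lowest eigenvalue of −d²/dτ² + (τ − A)² with Robin condition u'(0) = −u(0), then the lowest eigenvalue of −d²/dτ² + (ζτ − ξ)² with the same boundary condition is at least −(1 − ζ²) + ζ²·μ(ζ^{-1}ξ). -/

import Mathlib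

open MeasureTheory Real Set Filter

/-- For `0 < ζ < 1` and `ξ ∈ ℝ`, the quadratic form of the Robin harmonic oscillator
decomposes as
`q_{ζ,ξ}(u) = (1−ζ²)[∫|u'|² − |u(0)|²] + ζ²[∫(|u'|² + (τ−ζ⁻¹ξ)²|u|²) − |u(0)|²]`
for every admissible (normalized) `u`; consequently, if the translated oscillator form is
bounded below by `μ(ζ⁻¹ξ)` and the Robin form by `−1`, then
`q_{ζ,ξ}(u) ≥ −(1−ζ²) + ζ²·μ(ζ⁻¹ξ)`, i.e. the lowest eigenvalue of
`−d²/dτ² + (ζτ−ξ)²` with `u'(0) = −u(0)` is at least `−(1−ζ²) + ζ²μ(ζ⁻¹ξ)`. -/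
theorem harm_robin_form_decomposition (ζ ξ : ℝ) (hζ : 0 < ζ) (hζ1 : ζ < 1)
    (μ : ℝ → ℝ) (u u' : ℝ → ℝ)
    (hderiv : ∀ τ ∈ Set.Ici (0 : ℝ), HasDerivWithinAt u (u' τ) (Set.Ici 0) τ)
    (hu : IntegrableOn (fun τ => (u τ) ^ 2) (Set.Ioi 0))
    (hu' : IntegrableOn (fun τ => (u' τ) ^ 2) (Set.Ioi 0))
    (hpot : IntegrableOn (fun τ => (ζ * τ - ξ) ^ 2 * (u τ) ^ 2) (Set.Ioi 0))
    (hnorm : (∫ τ in Set.Ioi (0 : ℝ), (u τ) ^ 2) = 1)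
    (hRobin : (∫ τ in Set.Ioi (0 : ℝ), (u' τ) ^ 2) - (u 0) ^ 2 ≥ -1)
    (hμ : (∫ τ in Set.Ioi (0 : ℝ), ((u' τ) ^ 2 + (τ - ζ⁻¹ * ξ) ^ 2 * (u τ) ^ 2))
            - (u 0) ^ 2 ≥ μ (ζ⁻¹ * ξ)) :
    ((∫ τ in Set.Ioi (0 : ℝ), ((u' τ) ^ 2 + (ζ * τ - ξ) ^ 2 * (u τ) ^ 2)) - (u 0) ^ 2
      = (1 - ζ ^ 2) * ((∫ τ in Set.Ioi (0 : ℝ), (u' τ) ^ 2) - (u 0) ^ 2)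
        + ζ ^ 2 * ((∫ τ in Set.Ioi (0 : ℝ),
            ((u' τ) ^ 2 + (τ - ζ⁻¹ * ξ) ^ 2 * (u τ) ^ 2)) - (u 0) ^ 2)) ∧
    (∫ τ in Set.Ioi (0 : ℝ), ((u' τ) ^ 2 + (ζ * τ - ξ) ^ 2 * (u τ) ^ 2)) - (u 0) ^ 2
      ≥ -(1 - ζ ^ 2) + ζ ^ 2 * μ (ζ⁻¹ * ξ) := by
  have hζ2 : (ζ:ℝ)^2 ≠ 0 := pow_ne_zero 2 hζ.ne'
  have hpt : ∀ τ : ℝ, (τ - ζ⁻¹ * ξ) ^ 2 * (u τ) ^ 2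
      = ζ⁻¹ ^ 2 * ((ζ * τ - ξ) ^ 2 * (u τ) ^ 2) := by
    intro τ
    have hz : ζ ≠ 0 := hζ.ne'
    field_simp
  have hpot2 : IntegrableOn (fun τ => (τ - ζ⁻¹ * ξ) ^ 2 * (u τ) ^ 2) (Set.Ioi 0) := by
    exact IntegrableOn.congr_fun (hpot.const_mul (ζ⁻¹ ^ 2))
      (fun τ _ => (hpt τ).symm) measurableSet_Ioi
  have hI1 : (∫ τ in Set.Ioi (0 : ℝ), ((u' τ) ^ 2 + (ζ * τ - ξ) ^ 2 * (u τ) ^ 2))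
      = (∫ τ in Set.Ioi (0 : ℝ), (u' τ) ^ 2)
        + (∫ τ in Set.Ioi (0 : ℝ), (ζ * τ - ξ) ^ 2 * (u τ) ^ 2) :=
    integral_add hu' hpot
  have hI2 : (∫ τ in Set.Ioi (0 : ℝ), ((u' τ) ^ 2 + (τ - ζ⁻¹ * ξ) ^ 2 * (u τ) ^ 2))
      = (∫ τ in Set.Ioi (0 : ℝ), (u' τ) ^ 2)
        + ζ⁻¹ ^ 2 * (∫ τ in Set.Ioi (0 : ℝ), (ζ * τ - ξ) ^ 2 * (u τ) ^ 2) := by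
    rw [integral_add hu' hpot2]
    congr 1
    rw [← integral_const_mul]
    exact setIntegral_congr_fun measurableSet_Ioi (fun τ _ => hpt τ)
  have hdec : (∫ τ in Set.Ioi (0 : ℝ), ((u' τ) ^ 2 + (ζ * τ - ξ) ^ 2 * (u τ) ^ 2)) - (u 0) ^ 2
      = (1 - ζ ^ 2) * ((∫ τ in Set.Ioi (0 : ℝ), (u' τ) ^ 2) - (u 0) ^ 2)
        + ζ ^ 2 * ((∫ τ in Set.Ioi (0 : ℝ),
            ((u' τ) ^ 2 + (τ - ζ⁻¹ * ξ) ^ 2 * (u τ) ^ 2)) - (u 0) ^ 2) := by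
    rw [hI1, hI2]
    field_simp
    ring
  refine ⟨hdec, ?_⟩
  rw [hdec]
  have h1 : (0:ℝ) ≤ 1 - ζ ^ 2 := by nlinarith
  nlinarith [mul_le_mul_of_nonneg_left hRobin h1,
    mul_le_mul_of_nonneg_left hμ (sq_nonneg ζ)]
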